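/- arXiv:2408.13695 — 2 statements merged into one kernel-verified Lean document; each statement's English description precedes it below -/
import Mathlib

section
/- Let p > 3 be a prime with p ≡ 3 (mod 4), let t ∈ F_p with t ≠ 0, and let E be the elliptic curve y² = x(x−1)(x+t²) over F_p. Then neither of the 2-torsion points Q₀ = (0, 0) and Q₂ = (−t², 0) lies in [2]E(F_p), the image of the doubling map on the group of F_p-rational points of E. -/
open WeierstrassCurve

/-- The elliptic curve `y² = x(x-1)(x+t²)`, i.e. `y² = x³ + (t²-1)x² - t²x`. -/
def TCurve {F : Type} [CommRing F] (t : F) : WeierstrassCurve F :=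
  ⟨0, t ^ 2 - 1, 0, -t ^ 2, 0⟩

/-- A Weierstrass curve over a finite field of characteristic `p` is supersingular if the number
of its rational points (including the point at infinity) is congruent to `1` modulo `p`. -/
def IsSupersingular (p : ℕ) {F : Type} [Field F] (W : WeierstrassCurve F) : Prop :=
  Nat.card W.toAffine.Point ≡ 1 [MOD p]

lemma tcurve_a₁ {F : Type} [CommRing F] (t : F) : (TCurve t).a₁ = 0 := rfl
lemma tcurve_a₂ {F : Type} [CommRing F] (t : F) : (TCurve t).a₂ = t ^ 2 - 1 := rfl
lemma tcurve_a₃ {F : Type} [CommRing F] (t : F) : (TCurve t).a₃ = 0 := rfl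
lemma tcurve_a₄ {F : Type} [CommRing F] (t : F) : (TCurve t).a₄ = -t ^ 2 := rfl
lemma tcurve_a₆ {F : Type} [CommRing F] (t : F) : (TCurve t).a₆ = 0 := rfl

/-- If `2P` is an affine point `(x₀, y₀)` on `TCurve t` over `ZMod p` (`p` an odd prime), then
there is an affine point `(x, y)` with `y ≠ 0` satisfying the curve equation such that the
doubling formula gives `x₀`. -/
lemma double_data (p : ℕ) [Fact p.Prime] (hp3 : 3 < p) (t x₀ y₀ : ZMod p)
    (h₀ : (TCurve t).toAffine.Nonsingular x₀ y₀) (P : (TCurve t).toAffine.Point)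
    (hP : 2 • P = WeierstrassCurve.Affine.Point.some _ _ h₀) :
    ∃ x y : ZMod p, y ≠ 0 ∧ y ^ 2 = x ^ 3 + (t ^ 2 - 1) * x ^ 2 - t ^ 2 * x ∧
      ((3 * x ^ 2 + 2 * (t ^ 2 - 1) * x - t ^ 2) / (2 * y)) ^ 2 - (t ^ 2 - 1) - x - x = x₀ := by
  have two_ne : (2 : ZMod p) ≠ 0 := by
    intro h
    have h2 : ((2 : ℕ) : ZMod p) = 0 := by exact_mod_cast h
    have := (ZMod.natCast_eq_zero_iff 2 p).mp h2
    have := Nat.le_of_dvd (by norm_num) this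
    omega
  rcases P with _ | @⟨x, y, h⟩
  · exfalso
    have hP' : (2 : ℕ) • (0 : (TCurve t).toAffine.Point) =
        WeierstrassCurve.Affine.Point.some _ _ h₀ := hP
    rw [two_nsmul, add_zero] at hP'
    exact WeierstrassCurve.Affine.Point.some_ne_zero h₀ hP'.symm
  · rw [two_nsmul] at hP
    by_cases hy : y = (TCurve t).toAffine.negY x y
    · rw [WeierstrassCurve.Affine.Point.add_of_Y_eq rfl hy] at hP
      exact absurd hP.symm (WeierstrassCurve.Affine.Point.some_ne_zero h₀)
    · rw [WeierstrassCurve.Affine.Point.add_of_Y_ne hy] at hP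
      have hy0 : y ≠ 0 := by
        intro h0
        apply hy
        simp [WeierstrassCurve.Affine.negY, tcurve_a₁, tcurve_a₃, h0]
      have heq : y ^ 2 = x ^ 3 + (t ^ 2 - 1) * x ^ 2 - t ^ 2 * x := by
        have := ((TCurve t).toAffine.equation_iff x y).mp h.1
        rw [tcurve_a₁, tcurve_a₂, tcurve_a₃, tcurve_a₄, tcurve_a₆] at this
        linear_combination this
      refine ⟨x, y, hy0, heq, ?_⟩
      have hslope : (TCurve t).toAffine.slope x x y y =
          (3 * x ^ 2 + 2 * (t ^ 2 - 1) * x - t ^ 2) / (2 * y) := by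
        rw [WeierstrassCurve.Affine.slope_of_Y_ne rfl hy, WeierstrassCurve.Affine.negY,
          tcurve_a₁, tcurve_a₂, tcurve_a₃, tcurve_a₄]
        ring_nf
      have hx0 : (TCurve t).toAffine.addX x x ((TCurve t).toAffine.slope x x y y) = x₀ := by
        have := hP
        rw [WeierstrassCurve.Affine.Point.some.injEq] at this
        exact this.1
      rw [WeierstrassCurve.Affine.addX, hslope, tcurve_a₁, tcurve_a₂] at hx0
      linear_combination hx0

lemma neg_one_not_square (p : ℕ) [Fact p.Prime] (hp : p % 4 = 3) :
    ¬ IsSquare (-1 : ZMod p) := fun h => (ZMod.exists_sq_eq_neg_one_iff.mp h) hp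

/-- Let `p > 3` be a prime with `p ≡ 3 (mod 4)`, `t ∈ F_p` with `t ≠ 0`, and let `E` be
the elliptic curve `y² = x(x-1)(x+t²)` over `F_p`. Then neither of the 2-torsion points
`Q₀ = (0,0)` and `Q₂ = (-t²,0)` is the double of an `F_p`-rational point of `E`. -/
theorem neg_square_torsion_not_in_double (p : ℕ) [Fact p.Prime] (hp3 : 3 < p)
    (hp : p % 4 = 3) (t : ZMod p) (ht : t ≠ 0) :
    (∀ (h₀ : (TCurve t).toAffine.Nonsingular 0 0) (P : (TCurve t).toAffine.Point),
      2 • P ≠ WeierstrassCurve.Affine.Point.some _ _ h₀) ∧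
    (∀ (h₂ : (TCurve t).toAffine.Nonsingular (-t ^ 2) 0) (P : (TCurve t).toAffine.Point),
      2 • P ≠ WeierstrassCurve.Affine.Point.some _ _ h₂) := by
  have two_ne : (2 : ZMod p) ≠ 0 := by
    intro h
    have h2 : ((2 : ℕ) : ZMod p) = 0 := by exact_mod_cast h
    have := (ZMod.natCast_eq_zero_iff 2 p).mp h2
    have := Nat.le_of_dvd (by norm_num) this
    omega
  constructor
  · intro h₀ P hP
    obtain ⟨x, y, hy0, heq, hx0⟩ := double_data p hp3 t 0 0 h₀ P hP
    have h2y : (2 : ZMod p) * y ≠ 0 := mul_ne_zero two_ne hy0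
    apply neg_one_not_square p hp
    refine ⟨(x ^ 2 - 2 * x - t ^ 2) / (2 * y), ?_⟩
    rw [div_mul_div_comm, eq_div_iff (mul_ne_zero h2y h2y)]
    field_simp at hx0
    linear_combination -hx0 - (4 * t ^ 2 + 8 * x) * heq
  · intro h₂ P hP
    obtain ⟨x, y, hy0, heq, hx0⟩ := double_data p hp3 t (-t ^ 2) 0 h₂ P hP
    have h2y : (2 : ZMod p) * (t * y) ≠ 0 := mul_ne_zero two_ne (mul_ne_zero ht hy0)
    apply neg_one_not_square p hp
    refine ⟨(x ^ 2 + t ^ 2) / (2 * (t * y)), ?_⟩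
    rw [div_mul_div_comm, eq_div_iff (mul_ne_zero h2y h2y)]
    field_simp at hx0
    linear_combination -hx0 - (4 * t ^ 2 - 4 + 8 * x) * heq
end

section
/- Let p be a prime with p ≡ 1 (mod 4) and let μ ∈ F_{p²} \ F_p be such that the Legendre elliptic curve E_{μ^{p−1}} over F_{p²} is supersingular. Then −(μ − μ^p)²/(μ·μ^p) is a square in F_p. -/
open WeierstrassCurve

open Finset

/-- The Legendre elliptic curve `y² = x(x-1)(x-s)` over a commutative ring. -/
def LegendreCurve {F : Type} [CommRing F] (s : F) : WeierstrassCurve F :=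
  ⟨0, -(s + 1), 0, s, 0⟩

open Finset

/-- A finset with a fixed-point-free involution has even cardinality. -/
theorem even_card_of_invol {α : Type} [DecidableEq α] :
    ∀ (S : Finset α) (ι : α → α), (∀ x ∈ S, ι x ∈ S) → (∀ x ∈ S, ι (ι x) = x) →
      (∀ x ∈ S, ι x ≠ x) → Even S.card := by
  intro S
  induction S using Finset.strongInduction with
  | _ S ih =>
    intro ι hmem hinv hne
    rcases S.eq_empty_or_nonempty with rfl | ⟨a, ha⟩
    · simp
    · have hιa : ι a ∈ S := hmem a ha
      have hne' : ι a ≠ a := hne a ha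
      set S' : Finset α := (S.erase a).erase (ι a) with hS'
      have hsub : S' ⊂ S := by
        refine Finset.ssubset_of_subset_of_ssubset ?_ (Finset.erase_ssubset ha)
        exact Finset.erase_subset _ _
      have hmemS' : ∀ x, x ∈ S' ↔ x ∈ S ∧ x ≠ a ∧ x ≠ ι a := by
        intro x
        simp only [hS', Finset.mem_erase]
        tauto
      have hE : Even S'.card := by
        refine ih S' hsub ι ?_ ?_ ?_
        · intro x hx
          rw [hmemS'] at hx ⊢
          obtain ⟨hxS, hxa, hxia⟩ := hx
          refine ⟨hmem x hxS, ?_, ?_⟩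
          · intro h; exact hxia (by rw [← h, hinv x hxS])
          · intro h
            have := congrArg ι h
            rw [hinv x hxS, hinv a ha] at this
            exact hxa this
        · intro x hx; exact hinv x ((hmemS' x).mp hx).1
        · intro x hx; exact hne x ((hmemS' x).mp hx).1
      have hcard : S.card = S'.card + 2 := by
        rw [hS', Finset.card_erase_of_mem, Finset.card_erase_of_mem ha]
        · have : 1 ≤ S.card := Finset.card_pos.mpr ⟨a, ha⟩
          have h2 : 2 ≤ S.card := by
            have : ({a, ι a} : Finset α) ⊆ S := by
              intro x hx
              simp only [Finset.mem_insert, Finset.mem_singleton] at hx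
              rcases hx with rfl | rfl <;> assumption
            have := Finset.card_le_card this
            rwa [Finset.card_pair (Ne.symm hne')] at this
          omega
        · exact Finset.mem_erase.mpr ⟨hne', hιa⟩
      rw [hcard]
      exact hE.add (by norm_num)

/-- Sum of `x ^ k` over all of a finite field. -/
theorem sum_pow_field {K : Type} [Field K] [Fintype K] {k : ℕ} (hk : k ≠ 0) :
    ∑ x : K, x ^ k = if (Fintype.card K - 1) ∣ k then (-1 : K) else 0 := by
  classical
  let φ : Kˣ ↪ K := ⟨fun x ↦ x, Units.val_injective⟩
  have huniv : (Finset.univ.map φ) = Finset.univ \ {0} := by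
    ext x
    simpa only [Finset.mem_map, Finset.mem_univ, Function.Embedding.coeFn_mk, true_and,
      Finset.mem_sdiff, Finset.mem_singleton, φ] using
      (show (∃ a : Kˣ, (a : K) = x) ↔ x ≠ 0 from isUnit_iff_ne_zero)
  calc ∑ x : K, x ^ k = ∑ x ∈ Finset.univ \ {(0 : K)}, x ^ k := by
        rw [← Finset.sum_sdiff (Finset.subset_univ {(0:K)}), Finset.sum_singleton,
          zero_pow hk, add_zero]
    _ = ∑ x : Kˣ, ((x : K)) ^ k := by rw [← huniv, Finset.sum_map]; rfl
    _ = if (Fintype.card K - 1) ∣ k then (-1 : K) else 0 := by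
        have := FiniteField.sum_pow_units K k
        simpa using this


/-- Key character-sum computation. -/
theorem key_sum {K L : Type} [Field K] [Fintype K] [Field L] (f : K →+* L) {n : ℕ}
    (hn : n ≠ 0) (hcard : Fintype.card K = 2 * n + 1) (α β : L) :
    ∑ x : K, (f x * (f x + α) * (f x + β)) ^ n
      = -∑ i ∈ Finset.range (n + 1),
          (Nat.choose n i : L) ^ 2 * α ^ (n - i) * β ^ i := by
  classical
  have hx : ∀ k : ℕ, k ≠ 0 → ∑ x : K, (f x) ^ k = if 2 * n ∣ k then (-1 : L) else 0 := by
    intro k hk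
    have h1 : ∑ x : K, (f x) ^ k = f (∑ x : K, x ^ k) := by
      rw [map_sum]
      exact Finset.sum_congr rfl fun x _ => (map_pow f x k).symm
    rw [h1, sum_pow_field hk, hcard]
    have h2 : 2 * n + 1 - 1 = 2 * n := by omega
    rw [h2]
    split_ifs <;> simp
  calc ∑ x : K, (f x * (f x + α) * (f x + β)) ^ n
      = ∑ x : K, ∑ i ∈ range (n + 1), ∑ j ∈ range (n + 1),
          ((n.choose i : L) * (n.choose j : L) * α ^ (n - i) * β ^ (n - j))
            * (f x) ^ (n + i + j) := by
        refine Finset.sum_congr rfl fun x _ => ?_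
        rw [mul_pow, mul_pow, add_pow, add_pow, mul_assoc, Finset.sum_mul_sum]
        simp only [Finset.mul_sum]
        refine Finset.sum_congr rfl fun i _ => Finset.sum_congr rfl fun j _ => ?_
        rw [pow_add, pow_add]
        ring
    _ = ∑ i ∈ range (n + 1), ∑ j ∈ range (n + 1),
          ((n.choose i : L) * (n.choose j : L) * α ^ (n - i) * β ^ (n - j))
            * ∑ x : K, (f x) ^ (n + i + j) := by
        rw [Finset.sum_comm]
        refine Finset.sum_congr rfl fun i _ => ?_
        rw [Finset.sum_comm]
        exact Finset.sum_congr rfl fun j _ => (Finset.mul_sum _ _ _).symm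
    _ = ∑ i ∈ range (n + 1), ∑ j ∈ range (n + 1),
          ((n.choose i : L) * (n.choose j : L) * α ^ (n - i) * β ^ (n - j))
            * (if j = n - i then (-1 : L) else 0) := by
        refine Finset.sum_congr rfl fun i hi => Finset.sum_congr rfl fun j hj => ?_
        rw [hx _ (by omega)]
        congr 1
        rw [Finset.mem_range] at hi hj
        apply if_congr _ rfl rfl
        constructor
        · rintro ⟨c, hc⟩
          match c with
          | 0 => omega
          | 1 => omega
          | (c + 2) =>
            have : 2 * n * (c + 2) = 2 * n * c + 4 * n := by ring
            omega
        · rintro rfl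
          exact ⟨1, by omega⟩
    _ = ∑ i ∈ range (n + 1),
          -((n.choose i : L) * (n.choose (n - i) : L) * α ^ (n - i) * β ^ (n - (n - i))) := by
        refine Finset.sum_congr rfl fun i hi => ?_
        rw [Finset.mem_range] at hi
        simp only [mul_ite, mul_neg_one, mul_zero]
        rw [Finset.sum_ite_eq' (range (n + 1)) (n - i)]
        rw [if_pos (Finset.mem_range.mpr (by omega))]
    _ = -∑ i ∈ range (n + 1), (n.choose i : L) ^ 2 * α ^ (n - i) * β ^ i := by
        rw [← Finset.sum_neg_distrib]
        refine Finset.sum_congr rfl fun i hi => ?_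
        rw [Finset.mem_range] at hi
        have h1 : n - (n - i) = i := by omega
        rw [h1, Nat.choose_symm (by omega : i ≤ n)]
        ring


theorem sum_range_mul_split {M₀ : Type} [AddCommMonoid M₀] (h : ℕ → M₀) (a b : ℕ) :
    ∑ i ∈ Finset.range (a * b), h i
      = ∑ x ∈ Finset.range a, ∑ y ∈ Finset.range b, h (x * b + y) := by
  rcases Nat.eq_zero_or_pos b with rfl | hb
  · simp
  rw [← Finset.sum_product']
  refine Finset.sum_nbij' (fun i => (i / b, i % b)) (fun q => q.1 * b + q.2) ?_ ?_ ?_ ?_ ?_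
  · intro i hi
    rw [Finset.mem_range] at hi
    rw [Finset.mem_product, Finset.mem_range, Finset.mem_range]
    exact ⟨Nat.div_lt_of_lt_mul (by rwa [mul_comm] at hi), Nat.mod_lt _ hb⟩
  · intro q hq
    rw [Finset.mem_product, Finset.mem_range, Finset.mem_range] at hq
    rw [Finset.mem_range]
    calc q.1 * b + q.2 < q.1 * b + b := by omega
      _ = (q.1 + 1) * b := by ring
      _ ≤ a * b := Nat.mul_le_mul_right b (by omega)
  · intro i _
    simp only
    rw [mul_comm]
    exact Nat.div_add_mod i b
  · intro q hq
    rw [Finset.mem_product, Finset.mem_range, Finset.mem_range] at hq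
    rw [mul_comm, Nat.mul_add_div hb, Nat.mul_add_mod, Nat.div_eq_of_lt hq.2,
      Nat.mod_eq_of_lt hq.2]
    simp
  · intro i _
    congr 1
    rw [mul_comm]
    exact (Nat.div_add_mod i b).symm

/-- Lucas theorem, cast into a `ZMod p`-algebra. -/
theorem lucas_cast {p : ℕ} [Fact p.Prime] {F : Type} [Field F] [Algebra (ZMod p) F]
    {m : ℕ} (hmp : m < p) (a b : ℕ) (hb : b < p) :
    ((Nat.choose (m * p + m) (a * p + b) : F)) = (Nat.choose m a : F) * (Nat.choose m b : F) := by
  have hp0 : 0 < p := Nat.Prime.pos Fact.out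
  have hmod := Choose.choose_modEq_choose_mod_mul_choose_div_nat
    (p := p) (n := m * p + m) (k := a * p + b)
  have e1 : (m * p + m) % p = m := by rw [mul_comm, Nat.mul_add_mod, Nat.mod_eq_of_lt hmp]
  have e2 : (m * p + m) / p = m := by
    rw [mul_comm, Nat.mul_add_div hp0, Nat.div_eq_of_lt hmp, add_zero]
  have e3 : (a * p + b) % p = b := by rw [mul_comm, Nat.mul_add_mod, Nat.mod_eq_of_lt hb]
  have e4 : (a * p + b) / p = a := by
    rw [mul_comm, Nat.mul_add_div hp0, Nat.div_eq_of_lt hb, add_zero]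
  rw [e1, e2, e3, e4] at hmod
  have hz : ((Nat.choose (m * p + m) (a * p + b) : ℕ) : ZMod p)
      = ((Nat.choose m b * Nat.choose m a : ℕ) : ZMod p) :=
    (ZMod.natCast_eq_natCast_iff _ _ _).mpr hmod
  calc ((Nat.choose (m * p + m) (a * p + b) : F))
      = algebraMap (ZMod p) F ((Nat.choose (m * p + m) (a * p + b) : ℕ) : ZMod p) := by
        rw [map_natCast]
    _ = algebraMap (ZMod p) F ((Nat.choose m b * Nat.choose m a : ℕ) : ZMod p) := by rw [hz]
    _ = (Nat.choose m a : F) * (Nat.choose m b : F) := by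
        rw [map_natCast]
        push_cast
        ring



theorem legendre_equation_iff {K : Type} [CommRing K] (s x y : K) :
    (LegendreCurve s).toAffine.Equation x y ↔ y ^ 2 = x * (x - 1) * (x - s) := by
  rw [WeierstrassCurve.Affine.equation_iff]
  have ha1 : (LegendreCurve s).toAffine.a₁ = 0 := rfl
  have ha2 : (LegendreCurve s).toAffine.a₂ = -(s + 1) := rfl
  have ha3 : (LegendreCurve s).toAffine.a₃ = 0 := rfl
  have ha4 : (LegendreCurve s).toAffine.a₄ = s := rfl
  have ha6 : (LegendreCurve s).toAffine.a₆ = 0 := rfl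
  rw [ha1, ha2, ha3, ha4, ha6]
  constructor <;> intro h <;> linear_combination h

theorem legendre_Δ {K : Type} [CommRing K] (s : K) :
    (LegendreCurve s).Δ = 16 * (s * (s - 1)) ^ 2 := by
  have ha1 : (LegendreCurve s).a₁ = 0 := rfl
  have ha2 : (LegendreCurve s).a₂ = -(s + 1) := rfl
  have ha3 : (LegendreCurve s).a₃ = 0 := rfl
  have ha4 : (LegendreCurve s).a₄ = s := rfl
  have ha6 : (LegendreCurve s).a₆ = 0 := rfl
  rw [WeierstrassCurve.Δ, WeierstrassCurve.b₂, WeierstrassCurve.b₄, WeierstrassCurve.b₆,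
    WeierstrassCurve.b₈, ha1, ha2, ha3, ha4, ha6]
  ring

/-- number of square roots, cast into the field -/
theorem card_sqrts {K : Type} [Field K] [Fintype K] (hchar : ringChar K ≠ 2) (c : K) :
    ((Nat.card {y : K // y ^ 2 = c} : K)) = 1 + c ^ (Fintype.card K / 2) := by
  classical
  have hM : Fintype.card K / 2 ≠ 0 := by
    have := Fintype.one_lt_card (α := K)
    have hodd := FiniteField.odd_card_of_char_ne_two hchar
    omega
  rcases eq_or_ne c 0 with rfl | hc
  · have : Nat.card {y : K // y ^ 2 = 0} = 1 := by
      rw [Nat.card_eq_one_iff_unique]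
      constructor
      · constructor
        rintro ⟨y, hy⟩ ⟨z, hz⟩
        have hy' : y = 0 := by
          have := pow_eq_zero_iff (n := 2) (by norm_num) |>.mp hy
          exact this
        have hz' : z = 0 := pow_eq_zero_iff (n := 2) (by norm_num) |>.mp hz
        simp [hy', hz']
      · exact ⟨⟨0, by simp⟩⟩
    rw [this, zero_pow hM, add_zero, Nat.cast_one]
  by_cases hsq : IsSquare c
  · obtain ⟨b, rfl⟩ := hsq
    have hb : b ≠ 0 := by rintro rfl; simp at hc
    have hbb : b ≠ -b := by
      intro h
      apply hb
      have h2 : (2 : K) * b = 0 := by linear_combination h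
      rcases mul_eq_zero.mp h2 with h | h
      · exact absurd h (Ring.two_ne_zero hchar)
      · exact h
    have he : ∀ y : K, y ^ 2 = b * b ↔ (y ∈ ({b, -b} : Set K)) := by
      intro y
      rw [Set.mem_insert_iff, Set.mem_singleton_iff]
      constructor
      · intro h
        exact mul_self_eq_mul_self_iff.mp (by linear_combination h)
      · rintro (rfl | rfl) <;> ring
    have hcard : Nat.card {y : K // y ^ 2 = b * b} = 2 := by
      rw [Nat.card_congr (Equiv.subtypeEquivRight he)]
      rw [Nat.card_coe_set_eq, Set.ncard_pair hbb]
    rw [hcard]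
    have hpow : (b * b) ^ (Fintype.card K / 2) = 1 := by
      have h2 : 2 * (Fintype.card K / 2) = Fintype.card K - 1 :=
        Nat.two_mul_odd_div_two (FiniteField.odd_card_of_char_ne_two hchar)
      calc (b * b) ^ (Fintype.card K / 2) = b ^ (2 * (Fintype.card K / 2)) := by
            rw [pow_mul]; ring_nf
        _ = 1 := by rw [h2]; exact FiniteField.pow_card_sub_one_eq_one b hb
    rw [hpow]
    norm_num
  · have hempty : IsEmpty {y : K // y ^ 2 = c} := by
      constructor
      rintro ⟨y, hy⟩
      exact hsq ⟨y, by linear_combination -hy⟩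
    rw [Nat.card_of_isEmpty]
    have : c ^ (Fintype.card K / 2) = -1 := by
      rcases FiniteField.pow_dichotomy hchar hc with h | h
      · exact absurd ((FiniteField.isSquare_iff hchar hc).mpr h) hsq
      · exact h
    rw [this]
    norm_num

noncomputable def pointEquiv {K : Type} [Field K] (W : WeierstrassCurve K)
    (hΔ : W.toAffine.Δ ≠ 0) :
    W.toAffine.Point ≃ Option {xy : K × K // W.toAffine.Equation xy.1 xy.2} where
  toFun P := match P with
    | .zero => none
    | @WeierstrassCurve.Affine.Point.some _ _ _ x y h => some ⟨(x, y), h.1⟩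
  invFun o := match o with
    | none => .zero
    | some ⟨(_, _), h⟩ => .some _ _ ((W.toAffine.equation_iff_nonsingular_of_Δ_ne_zero hΔ).mp h)
  left_inv P := by cases P with
    | zero => rfl
    | some h => rfl
  right_inv o := by
    match o with
    | none => rfl
    | some ⟨(x, y), h⟩ => rfl

theorem nat_card_sigma {K : Type} [Fintype K] (β : K → Type) [∀ x, Finite (β x)] :
    Nat.card ((x : K) × β x) = ∑ x : K, Nat.card (β x) := by
  letI : ∀ x, Fintype (β x) := fun x => Fintype.ofFinite _
  simp [Nat.card_eq_fintype_card, Fintype.card_sigma]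

theorem legendre_card {K : Type} [Field K] [Fintype K] (hchar : ringChar K ≠ 2) {s : K}
    (hs0 : s ≠ 0) (hs1 : s ≠ 1) :
    ((Nat.card (LegendreCurve s).toAffine.Point : K)) =
      1 + ∑ x : K, (1 + (x * (x - 1) * (x - s)) ^ (Fintype.card K / 2)) := by
  classical
  have h2 : (2 : K) ≠ 0 := Ring.two_ne_zero hchar
  have hΔ : (LegendreCurve s).toAffine.Δ ≠ 0 := by
    show (LegendreCurve s).Δ ≠ 0
    rw [legendre_Δ]
    have h16 : (16 : K) = 2 ^ 4 := by norm_num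
    apply mul_ne_zero
    · rw [h16]; exact pow_ne_zero _ h2
    · exact pow_ne_zero _ (mul_ne_zero hs0 (sub_ne_zero.mpr hs1))
  have e1 := pointEquiv (LegendreCurve s) hΔ
  have e2 : {xy : K × K // (LegendreCurve s).toAffine.Equation xy.1 xy.2}
      ≃ ((x : K) × {y : K // y ^ 2 = x * (x - 1) * (x - s)}) := by
    refine (Equiv.subtypeEquivRight ?_).trans
      (Equiv.subtypeProdEquivSigmaSubtype (fun x y => y ^ 2 = x * (x - 1) * (x - s)))
    intro xy
    exact legendre_equation_iff s xy.1 xy.2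
  have hfin : Finite {xy : K × K // (LegendreCurve s).toAffine.Equation xy.1 xy.2} := by
    infer_instance
  rw [Nat.card_congr e1, Finite.card_option, Nat.card_congr e2, nat_card_sigma]
  rw [Nat.cast_add, Nat.cast_one, Nat.cast_sum]
  rw [add_comm]
  congr 1
  exact Finset.sum_congr rfl fun x _ => card_sqrts hchar _


theorem no_square_aux {p : ℕ} [Fact p.Prime] (hp5 : 5 ≤ p) (hp : p % 4 = 1) (T N : ZMod p)
    (hgne : ∀ x : ZMod p, x * x + T * x + N ≠ 0)
    (hdisc : ¬ IsSquare (T ^ 2 - 4 * N))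
    (hW : ∑ x : ZMod p, (x * (x * x + T * x + N)) ^ (p / 2) = 0) :
    ¬ IsSquare N := by
  classical
  haveI : Fact (2 < p) := ⟨by omega⟩
  set m := p / 2 with hm
  have hpodd : p = 2 * m + 1 := by omega
  have hmeven : m % 2 = 0 := by omega
  have hm0 : m ≠ 0 := by omega
  have hone : (1 : ZMod p) ≠ -1 := fun h => ZMod.neg_one_ne_one h.symm
  have hdisc0 : T ^ 2 - 4 * N ≠ 0 := by
    intro h
    exact hdisc (h ▸ ⟨0, by ring⟩)
  have hdiscm : (T ^ 2 - 4 * N) ^ m = -1 := by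
    have hsq : ((T ^ 2 - 4 * N) ^ m) * ((T ^ 2 - 4 * N) ^ m) = 1 := by
      rw [← pow_add]
      have h2 : m + m = p - 1 := by omega
      rw [h2]
      exact ZMod.pow_card_sub_one_eq_one hdisc0
    rcases mul_self_eq_one_iff.mp hsq with h | h
    · exact absurd ((ZMod.euler_criterion p hdisc0).mpr h) hdisc
    · exact h
  have heuler : ∀ x : ZMod p, x ≠ 0 →
      (x * (x * x + T * x + N)) ^ m = 1 ∨ (x * (x * x + T * x + N)) ^ m = -1 := by
    intro x hx
    have hqx : x * (x * x + T * x + N) ≠ 0 := mul_ne_zero hx (hgne x)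
    have hsq : ((x * (x * x + T * x + N)) ^ m) * ((x * (x * x + T * x + N)) ^ m) = 1 := by
      rw [← pow_add]
      have h2 : m + m = p - 1 := by omega
      rw [h2]
      exact ZMod.pow_card_sub_one_eq_one hqx
    exact mul_self_eq_one_iff.mp hsq
  set Ps : Finset (ZMod p) :=
    univ.filter (fun x => x ≠ 0 ∧ (x * (x * x + T * x + N)) ^ m = 1) with hPs
  set Ne : Finset (ZMod p) :=
    univ.filter (fun x => x ≠ 0 ∧ (x * (x * x + T * x + N)) ^ m = -1) with hNe
  have hmemNe : ∀ x, x ∈ Ne ↔ x ≠ 0 ∧ (x * (x * x + T * x + N)) ^ m = -1 := by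
    intro x
    rw [hNe, Finset.mem_filter]
    simp only [Finset.mem_univ, true_and]
  have hmemPs : ∀ x, x ∈ Ps ↔ x ≠ 0 ∧ (x * (x * x + T * x + N)) ^ m = 1 := by
    intro x
    rw [hPs, Finset.mem_filter]
    simp only [Finset.mem_univ, true_and]
  have hdisj : Disjoint Ps Ne := by
    rw [Finset.disjoint_left]
    intro x hx1 hx2
    exact hone ((((hmemPs x).mp hx1).2).symm.trans (((hmemNe x).mp hx2).2))
  have hunion : Ps ∪ Ne = univ.filter (fun x => x ≠ 0) := by
    ext x
    simp only [Finset.mem_union, Finset.mem_filter, Finset.mem_univ, true_and]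
    rw [hmemPs, hmemNe]
    constructor
    · rintro (⟨h, _⟩ | ⟨h, _⟩) <;> exact h
    · intro hx
      rcases heuler x hx with h | h
      · exact Or.inl ⟨hx, h⟩
      · exact Or.inr ⟨hx, h⟩
  have hcard_union : Ps.card + Ne.card = p - 1 := by
    rw [← Finset.card_union_of_disjoint hdisj, hunion, Finset.filter_ne', Finset.card_erase_of_mem
      (Finset.mem_univ 0), Finset.card_univ, ZMod.card]
  have hWsplit : (Ps.card : ZMod p) + (Ne.card : ZMod p) * (-1) = 0 := by
    have h1 : ∑ x ∈ Ps ∪ Ne, (x * (x * x + T * x + N)) ^ m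
        = ∑ x : ZMod p, (x * (x * x + T * x + N)) ^ m := by
      apply Finset.sum_subset (Finset.subset_univ _)
      intro x _ hx
      have hx0 : x = 0 := by
        by_contra h
        rcases heuler x h with h' | h'
        · exact hx (Finset.mem_union_left _ ((hmemPs x).mpr ⟨h, h'⟩))
        · exact hx (Finset.mem_union_right _ ((hmemNe x).mpr ⟨h, h'⟩))
      rw [hx0, zero_mul, zero_pow hm0]
    have h2 : ∑ x ∈ Ps, (x * (x * x + T * x + N)) ^ m = (Ps.card : ZMod p) := by
      rw [Finset.sum_congr rfl (fun x hx => ((hmemPs x).mp hx).2)]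
      simp
    have h3 : ∑ x ∈ Ne, (x * (x * x + T * x + N)) ^ m = (Ne.card : ZMod p) * (-1) := by
      rw [Finset.sum_congr rfl (fun x hx => ((hmemNe x).mp hx).2)]
      simp [mul_comm]
    rw [← h2, ← h3, ← Finset.sum_union hdisj, h1, hW]
  have hPsNe : Ps.card = Ne.card := by
    have hcast : ((Ps.card : ℕ) : ZMod p) = ((Ne.card : ℕ) : ZMod p) := by
      linear_combination hWsplit
    have hmod := (ZMod.natCast_eq_natCast_iff _ _ _).mp hcast
    have hlt1 : Ps.card < p := by omega
    have hlt2 : Ne.card < p := by omega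
    unfold Nat.ModEq at hmod
    rwa [Nat.mod_eq_of_lt hlt1, Nat.mod_eq_of_lt hlt2] at hmod
  have hNecard : Ne.card = m := by omega
  -- now assume N is a square and derive a contradiction
  rintro ⟨r, hr⟩
  have hr0 : r ≠ 0 := by
    intro h
    exact hgne 0 (by rw [hr, h]; ring)
  have hN0 : N ≠ 0 := by rw [hr]; exact mul_ne_zero hr0 hr0
  have hNm : N ^ m = 1 := by
    have h2 : m + m = p - 1 := by omega
    rw [hr, mul_pow, ← pow_add, h2]
    exact ZMod.pow_card_sub_one_eq_one hr0
  have hmr0 : (-r) ≠ 0 := neg_ne_zero.mpr hr0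
  have hprod : ((r * (r * r + T * r + N)) ^ m) * (((-r) * ((-r) * (-r) + T * (-r) + N)) ^ m)
      = -1 := by
    rw [← mul_pow]
    have hqq : (r * (r * r + T * r + N)) * ((-r) * ((-r) * (-r) + T * (-r) + N))
        = (N * N) * (T ^ 2 - 4 * N) := by
      rw [hr]; ring
    rw [hqq, mul_pow, mul_pow, hNm, hdiscm]
    ring
  -- exactly one of r, -r lies in Ne
  have hkey : ∃ r' : ZMod p, r' ≠ 0 ∧ N = r' * r' ∧ r' ∈ Ne ∧ (-r') ∉ Ne := by
    rcases heuler r hr0 with h1 | h1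
    · refine ⟨-r, hmr0, by rw [hr]; ring, ?_, ?_⟩
      · refine (hmemNe _).mpr ⟨hmr0, ?_⟩
        rcases heuler (-r) hmr0 with h2 | h2
        · exfalso
          rw [h1, h2, one_mul] at hprod
          exact hone hprod
        · exact h2
      · rw [neg_neg]
        rw [hmemNe]
        rintro ⟨-, h⟩
        rw [h] at h1
        exact hone h1.symm
    · refine ⟨r, hr0, hr, (hmemNe _).mpr ⟨hr0, h1⟩, ?_⟩
      rw [hmemNe]
      rintro ⟨-, h⟩
      rw [h1, h] at hprod
      have : (1 : ZMod p) = -1 := by linear_combination hprod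
      exact hone this
  obtain ⟨r', hr'0, hr'sq, hr'Ne, hr'P⟩ := hkey
  -- the involution x ↦ N * x⁻¹ on Ne.erase r'
  have hAcard : (Ne.erase r').card = m - 1 := by
    rw [Finset.card_erase_of_mem hr'Ne, hNecard]
  have hAeven : Even (Ne.erase r').card := by
    apply even_card_of_invol (Ne.erase r') (fun x => N * x⁻¹)
    · intro x hxA
      obtain ⟨hxr', hxNe⟩ := Finset.mem_erase.mp hxA
      obtain ⟨hx0, hxval⟩ := (hmemNe x).mp hxNe
      have hι0 : N * x⁻¹ ≠ 0 := mul_ne_zero hN0 (inv_ne_zero hx0)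
      rw [Finset.mem_erase]
      constructor
      · -- ι x ≠ r'
        intro h
        apply hxr'
        have h2 : N = r' * x := by
          have := congrArg (· * x) h
          simpa [mul_assoc, inv_mul_cancel₀ hx0] using this
        rw [hr'sq] at h2
        exact (mul_left_cancel₀ hr'0 h2).symm
      · refine (hmemNe _).mpr ⟨hι0, ?_⟩
        have hqident : (N * x⁻¹) * ((N * x⁻¹) * (N * x⁻¹) + T * (N * x⁻¹) + N)
            = (N * x⁻¹ * x⁻¹) ^ 2 * (x * (x * x + T * x + N)) := by
          field_simp
          ring
        rw [hqident, mul_pow, hxval]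
        have hu : N * x⁻¹ * x⁻¹ ≠ 0 := mul_ne_zero hι0 (inv_ne_zero hx0)
        have hone' : ((N * x⁻¹ * x⁻¹) ^ 2) ^ m = 1 := by
          rw [← pow_mul]
          have h2m : 2 * m = p - 1 := by omega
          rw [h2m]
          exact ZMod.pow_card_sub_one_eq_one hu
        rw [hone', one_mul]
    · intro x hxA
      obtain ⟨hxr', hxNe⟩ := Finset.mem_erase.mp hxA
      obtain ⟨hx0, -⟩ := (hmemNe x).mp hxNe
      field_simp
    · intro x hxA
      obtain ⟨hxr', hxNe⟩ := Finset.mem_erase.mp hxA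
      obtain ⟨hx0, -⟩ := (hmemNe x).mp hxNe
      intro h
      have h2 : N = x * x := by
        have := congrArg (· * x) h
        simpa [mul_assoc, inv_mul_cancel₀ hx0] using this
      have hx2 : x * x = r' * r' := by rw [← h2, hr'sq]
      rcases mul_self_eq_mul_self_iff.mp hx2 with h' | h'
      · exact hxr' h'
      · apply hr'P
        rw [← h']
        exact hxNe
  rw [hAcard, Nat.even_iff] at hAeven
  omega


/-- Let `p ≡ 1 (mod 4)` be a prime and `μ ∈ F_{p²} \ F_p` such that the Legendre curve
`E_{μ^{p-1}}` over `F_{p²}` is supersingular. Then `-(μ - μ^p)²/(μ·μ^p)` is a square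
in `F_p`. -/
theorem neg_sq_div_norm_isSquare (p : ℕ) [Fact p.Prime] (hp : p % 4 = 1)
    (μ : GaloisField p 2) (hμ : μ ∉ Set.range (algebraMap (ZMod p) (GaloisField p 2)))
    (hss : IsSupersingular p (LegendreCurve (μ ^ (p - 1)))) :
    ∃ b : ZMod p, algebraMap (ZMod p) (GaloisField p 2) (b * b) =
      -(μ - μ ^ p) ^ 2 / (μ * μ ^ p) := by
  classical
  have hprime : p.Prime := Fact.out
  have hp2le : 2 ≤ p := hprime.two_le
  have hp5 : 5 ≤ p := by omega
  letI : Fintype (GaloisField p 2) := Fintype.ofFinite (GaloisField p 2)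
  have hcardF : Fintype.card (GaloisField p 2) = p ^ 2 := by
    rw [← Nat.card_eq_fintype_card]
    exact GaloisField.card p 2 (by norm_num)
  set m := p / 2 with hm
  have hpodd : p = 2 * m + 1 := by omega
  have hm0 : m ≠ 0 := by omega
  have hmeven : m % 2 = 0 := by omega
  have hqodd : p ^ 2 = 2 * (m * p + m) + 1 := by rw [hpodd]; ring
  set M := m * p + m with hM
  have hcard2M : Fintype.card (GaloisField p 2) = 2 * M + 1 := by rw [hcardF, hM]; exact hqodd
  have hM0 : M ≠ 0 := by
    have h1 : m ≤ m * p := Nat.le_mul_of_pos_right m (by omega)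
    omega
  have hMdiv : Fintype.card (GaloisField p 2) / 2 = M := by omega
  have hringchar : ringChar (GaloisField p 2) = p := ringChar.eq (GaloisField p 2) p
  have hchar2 : ringChar (GaloisField p 2) ≠ 2 := by rw [hringchar]; omega
  have hinj : Function.Injective (algebraMap (ZMod p) (GaloisField p 2)) := (algebraMap (ZMod p) (GaloisField p 2)).injective
  have hμ0 : μ ≠ 0 := fun h => hμ ⟨0, by rw [map_zero, h]⟩
  set ν := μ ^ p with hν
  have hν0 : ν ≠ 0 := pow_ne_zero _ hμ0
  have hμq : μ ^ p ^ 2 = μ := by rw [← hcardF]; exact FiniteField.pow_card μ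
  have hνp : ν ^ p = μ := by rw [hν, ← pow_mul, ← pow_two]; exact hμq
  -- descent to the prime field
  have descent : ∀ z : (GaloisField p 2), z ^ p = z → ∃ a : ZMod p, algebraMap (ZMod p) (GaloisField p 2) a = z := by
    intro z hz
    by_contra hcon
    push_neg at hcon
    set P : Polynomial (GaloisField p 2) := Polynomial.X ^ p - Polynomial.X with hP
    have hPne : P ≠ 0 := FiniteField.X_pow_card_sub_X_ne_zero (GaloisField p 2) hprime.one_lt
    have hdeg : P.natDegree = p := FiniteField.X_pow_card_sub_X_natDegree_eq (GaloisField p 2) hprime.one_lt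
    set S : Finset (GaloisField p 2) := Finset.univ.image (algebraMap (ZMod p) (GaloisField p 2)) with hS
    have hzS : z ∉ S := by
      intro h
      obtain ⟨a, _, ha⟩ := Finset.mem_image.mp h
      exact hcon a ha
    have hroots : ∀ w ∈ insert z S, w ∈ P.roots := by
      intro w hw
      rw [Polynomial.mem_roots hPne]
      have hwp : w ^ p = w := by
        rcases Finset.mem_insert.mp hw with rfl | hw'
        · exact hz
        · obtain ⟨a, _, ha⟩ := Finset.mem_image.mp hw'
          rw [← ha, ← map_pow, ZMod.pow_card]
      show Polynomial.IsRoot P w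
      rw [hP]
      simp [Polynomial.IsRoot, hwp]
    have hcard : (insert z S).card ≤ p := by
      calc (insert z S).card ≤ P.roots.toFinset.card :=
            Finset.card_le_card (fun w hw => Multiset.mem_toFinset.mpr (hroots w hw))
        _ ≤ Multiset.card P.roots := P.roots.toFinset_card_le
        _ ≤ P.natDegree := P.card_roots'
        _ = p := hdeg
    have hScard : S.card = p := by
      rw [hS, Finset.card_image_of_injective _ hinj, Finset.card_univ, ZMod.card]
    rw [Finset.card_insert_of_notMem hzS, hScard] at hcard
    omega
  have hμν : μ ≠ ν := by
    intro h
    obtain ⟨a, ha⟩ := descent μ h.symm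
    exact hμ ⟨a, ha⟩
  obtain ⟨T₀, hT⟩ := descent (μ + ν) (by rw [add_pow_char, hνp, ← hν]; ring)
  obtain ⟨N₀, hN⟩ := descent (μ * ν) (by rw [mul_pow, hνp, ← hν]; ring)
  have hN0 : N₀ ≠ 0 := by
    intro h
    rw [h, map_zero] at hN
    exact (mul_ne_zero hμ0 hν0) hN.symm
  have hdiscF : algebraMap (ZMod p) (GaloisField p 2) (T₀ ^ 2 - 4 * N₀) = (μ - ν) ^ 2 := by
    rw [map_sub, map_pow, map_mul, hT, hN, map_ofNat]
    ring
  have hδ0 : μ - ν ≠ 0 := sub_ne_zero.mpr hμν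
  have h2F : (2 : (GaloisField p 2)) ≠ 0 := Ring.two_ne_zero hchar2
  have hδp : (μ - ν) ^ p = -(μ - ν) := by
    rw [sub_pow_char, hνp, ← hν]
    ring
  have hfixcontr : (μ - ν) ^ p = μ - ν → False := by
    intro hh
    have h2 : (2 : (GaloisField p 2)) * (μ - ν) = 0 := by linear_combination hδp - hh
    rcases mul_eq_zero.mp h2 with h | h
    · exact h2F h
    · exact hδ0 h
  have hdisc_nsq : ¬ IsSquare (T₀ ^ 2 - 4 * N₀) := by
    rintro ⟨e, he⟩
    have h1 : (algebraMap (ZMod p) (GaloisField p 2) e) * (algebraMap (ZMod p) (GaloisField p 2) e) = (μ - ν) * (μ - ν) := by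
      rw [← map_mul, ← he, hdiscF]
      ring
    have hfix : (algebraMap (ZMod p) (GaloisField p 2) e) ^ p = algebraMap (ZMod p) (GaloisField p 2) e := by
      rw [← map_pow, ZMod.pow_card]
    rcases mul_self_eq_mul_self_iff.mp h1 with h | h
    · rw [h] at hfix
      exact hfixcontr hfix
    · rw [h] at hfix
      apply hfixcontr
      have hpoddNat : Odd p := by
        rw [Nat.odd_iff]
        omega
      have : (-(μ - ν)) ^ p = -(μ - ν) ^ p := hpoddNat.neg_pow _
      rw [this] at hfix
      linear_combination -hfix
  -- The Legendre parameter
  set s : (GaloisField p 2) := μ ^ (p - 1) with hs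
  have hsμ : s * μ = ν := by
    rw [hs, hν, ← pow_succ]
    congr 1
    omega
  have hs0 : s ≠ 0 := pow_ne_zero _ hμ0
  have hs1 : s ≠ 1 := by
    intro h
    rw [h, one_mul] at hsμ
    exact hμν hsμ
  -- Step A : the full character sum over (GaloisField p 2) vanishes
  have hcount := legendre_card (K := (GaloisField p 2)) hchar2 hs0 hs1
  have honeF : ((Nat.card (LegendreCurve s).toAffine.Point : (GaloisField p 2))) = 1 := by
    have h1 : ((Nat.card (LegendreCurve s).toAffine.Point : ℕ) : ZMod p) = ((1 : ℕ) : ZMod p) :=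
      (ZMod.natCast_eq_natCast_iff _ _ _).mpr hss
    calc ((Nat.card (LegendreCurve s).toAffine.Point : (GaloisField p 2)))
        = algebraMap (ZMod p) (GaloisField p 2) ((Nat.card (LegendreCurve s).toAffine.Point : ℕ) : ZMod p) := by
          rw [map_natCast]
      _ = 1 := by rw [h1]; simp
  have hSzero : ∑ x : (GaloisField p 2), (x * (x - 1) * (x - s)) ^ M = 0 := by
    rw [honeF] at hcount
    have h2 : ∑ x : (GaloisField p 2), (1 + (x * (x - 1) * (x - s)) ^ (Fintype.card (GaloisField p 2) / 2)) = 0 :=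
      (left_eq_add.mp hcount)
    rw [hMdiv, Finset.sum_add_distrib, Finset.sum_const, Finset.card_univ] at h2
    have h3 : ((Fintype.card (GaloisField p 2)) • (1 : (GaloisField p 2))) = 0 := by
      rw [nsmul_eq_mul, hcardF, mul_one, Nat.cast_pow, CharP.cast_eq_zero]
      norm_num
    rw [h3, zero_add] at h2
    exact h2
  -- usage 1 of key_sum
  have hkey1 := key_sum (RingHom.id (GaloisField p 2)) hM0 hcard2M (-1 : (GaloisField p 2)) (-s)
  have hL : ∑ x : (GaloisField p 2), ((RingHom.id (GaloisField p 2)) x * ((RingHom.id (GaloisField p 2)) x + -1) * ((RingHom.id (GaloisField p 2)) x + -s)) ^ M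
      = ∑ x : (GaloisField p 2), (x * (x - 1) * (x - s)) ^ M := by
    refine Finset.sum_congr rfl fun x _ => ?_
    simp only [RingHom.id_apply]
    congr 1
    ring
  rw [hL, hSzero] at hkey1
  have hsum1 : ∑ i ∈ range (M + 1), (Nat.choose M i : (GaloisField p 2)) ^ 2 * (-1 : (GaloisField p 2)) ^ (M - i) * (-s) ^ i
      = 0 := neg_eq_zero.mp hkey1.symm
  have hc2 : ∑ i ∈ range (M + 1), (Nat.choose M i : (GaloisField p 2)) ^ 2 * s ^ i = 0 := by
    have htr : ∀ i ∈ range (M + 1), (Nat.choose M i : (GaloisField p 2)) ^ 2 * (-1 : (GaloisField p 2)) ^ (M - i) * (-s) ^ i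
        = (-1 : (GaloisField p 2)) ^ M * ((Nat.choose M i : (GaloisField p 2)) ^ 2 * s ^ i) := by
      intro i hi
      rw [Finset.mem_range] at hi
      rw [neg_pow s i]
      have hpw : (-1 : (GaloisField p 2)) ^ (M - i) * (-1 : (GaloisField p 2)) ^ i = (-1 : (GaloisField p 2)) ^ M := by
        rw [← pow_add]
        congr 1
        omega
      calc (Nat.choose M i : (GaloisField p 2)) ^ 2 * (-1 : (GaloisField p 2)) ^ (M - i) * ((-1 : (GaloisField p 2)) ^ i * s ^ i)
          = ((-1 : (GaloisField p 2)) ^ (M - i) * (-1 : (GaloisField p 2)) ^ i) * ((Nat.choose M i : (GaloisField p 2)) ^ 2 * s ^ i) := by ring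
        _ = (-1 : (GaloisField p 2)) ^ M * ((Nat.choose M i : (GaloisField p 2)) ^ 2 * s ^ i) := by rw [hpw]
    rw [Finset.sum_congr rfl htr, ← Finset.mul_sum] at hsum1
    rcases mul_eq_zero.mp hsum1 with h | h
    · exact absurd h (pow_ne_zero _ (neg_ne_zero.mpr one_ne_zero))
    · exact h
  -- Lucas reduction
  have hext : ∑ i ∈ range ((m + 1) * p), (Nat.choose M i : (GaloisField p 2)) ^ 2 * s ^ i
      = ∑ i ∈ range (M + 1), (Nat.choose M i : (GaloisField p 2)) ^ 2 * s ^ i := by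
    symm
    apply Finset.sum_subset
    · apply Finset.range_subset_range.mpr
      have hmp : m + 1 ≤ p := by omega
      calc M + 1 = m * p + (m + 1) := by rw [hM, add_assoc]
        _ ≤ m * p + p := Nat.add_le_add_left hmp _
        _ = (m + 1) * p := by ring
    · intro i _ hni
      have hMi : M < i := by
        by_contra hcon
        exact hni (Finset.mem_range.mpr (by omega))
      rw [Nat.choose_eq_zero_of_lt hMi]
      norm_num
  have hdouble : ∑ a ∈ range (m + 1), ∑ b ∈ range p,
      (Nat.choose M (a * p + b) : (GaloisField p 2)) ^ 2 * s ^ (a * p + b) = 0 := by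
    rw [← sum_range_mul_split (fun i => (Nat.choose M i : (GaloisField p 2)) ^ 2 * s ^ i) (m + 1) p, hext, hc2]
  have hlucas_term : ∀ a ∈ range (m + 1), ∀ b ∈ range p,
      (Nat.choose M (a * p + b) : (GaloisField p 2)) ^ 2 * s ^ (a * p + b)
        = ((Nat.choose m a : (GaloisField p 2)) ^ 2 * (s ^ p) ^ a) * ((Nat.choose m b : (GaloisField p 2)) ^ 2 * s ^ b) := by
    intro a _ b hb
    rw [Finset.mem_range] at hb
    rw [hM, lucas_cast (by omega : m < p) a b hb, pow_add, pow_mul]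
    ring
  have hfactored : (∑ a ∈ range (m + 1), (Nat.choose m a : (GaloisField p 2)) ^ 2 * (s ^ p) ^ a)
      * (∑ b ∈ range p, (Nat.choose m b : (GaloisField p 2)) ^ 2 * s ^ b) = 0 := by
    rw [Finset.sum_mul_sum, ← hdouble]
    exact Finset.sum_congr rfl fun a ha =>
      Finset.sum_congr rfl fun b hb => (hlucas_term a ha b hb).symm
  have hshrink : ∑ b ∈ range p, (Nat.choose m b : (GaloisField p 2)) ^ 2 * s ^ b
      = ∑ b ∈ range (m + 1), (Nat.choose m b : (GaloisField p 2)) ^ 2 * s ^ b := by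
    symm
    apply Finset.sum_subset (Finset.range_subset_range.mpr (by omega))
    intro i _ hni
    have hmi : m < i := by
      by_contra hcon
      exact hni (Finset.mem_range.mpr (by omega))
    rw [Nat.choose_eq_zero_of_lt hmi]
    norm_num
  set c1 : (GaloisField p 2) := ∑ b ∈ range (m + 1), (Nat.choose m b : (GaloisField p 2)) ^ 2 * s ^ b with hc1def
  have hfrob : ∑ a ∈ range (m + 1), (Nat.choose m a : (GaloisField p 2)) ^ 2 * (s ^ p) ^ a = c1 ^ p := by
    rw [hc1def]
    rw [show (∑ b ∈ range (m + 1), (Nat.choose m b : (GaloisField p 2)) ^ 2 * s ^ b) ^ p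
        = frobenius (GaloisField p 2) p (∑ b ∈ range (m + 1), (Nat.choose m b : (GaloisField p 2)) ^ 2 * s ^ b) from rfl]
    rw [map_sum]
    refine Finset.sum_congr rfl fun b _ => ?_
    rw [map_mul, map_pow, map_pow, map_natCast]
    rw [frobenius_def]
  have hc1 : c1 = 0 := by
    rw [hshrink, hfrob] at hfactored
    rcases mul_eq_zero.mp hfactored with h | h
    · exact pow_eq_zero_iff (by omega : p ≠ 0) |>.mp h
    · exact h
  have hc : ∑ i ∈ range (m + 1), (Nat.choose m i : (GaloisField p 2)) ^ 2 * μ ^ (m - i) * ν ^ i = 0 := by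
    have hterm : ∀ i ∈ range (m + 1), (Nat.choose m i : (GaloisField p 2)) ^ 2 * μ ^ (m - i) * ν ^ i
        = μ ^ m * ((Nat.choose m i : (GaloisField p 2)) ^ 2 * s ^ i) := by
      intro i hi
      rw [Finset.mem_range] at hi
      have hνi : ν ^ i = μ ^ (p * i) := by rw [hν, ← pow_mul]
      have hsi : s ^ i = μ ^ (p * i - i) := by
        rw [hs, ← pow_mul, Nat.sub_mul, one_mul]
      have hle : i ≤ p * i := Nat.le_mul_of_pos_left i (by omega)
      have hexp : m - i + p * i = m + (p * i - i) := by
        revert hle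
        generalize p * i = K
        intro hle
        omega
      rw [hνi, hsi]
      calc (Nat.choose m i : (GaloisField p 2)) ^ 2 * μ ^ (m - i) * μ ^ (p * i)
          = (Nat.choose m i : (GaloisField p 2)) ^ 2 * μ ^ (m - i + p * i) := by rw [pow_add]; ring
        _ = (Nat.choose m i : (GaloisField p 2)) ^ 2 * μ ^ (m + (p * i - i)) := by rw [hexp]
        _ = μ ^ m * ((Nat.choose m i : (GaloisField p 2)) ^ 2 * μ ^ (p * i - i)) := by rw [pow_add]; ring
    rw [Finset.sum_congr rfl hterm, ← Finset.mul_sum, ← hc1def, hc1, mul_zero]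
  -- usage 2 of key_sum
  have hcardZ : Fintype.card (ZMod p) = 2 * m + 1 := by rw [ZMod.card]; omega
  have hkey2 := key_sum (algebraMap (ZMod p) (GaloisField p 2)) hm0 hcardZ μ ν
  have hW : ∑ x : ZMod p, (x * (x * x + T₀ * x + N₀)) ^ m = 0 := by
    have hmap : algebraMap (ZMod p) (GaloisField p 2) (∑ x : ZMod p, (x * (x * x + T₀ * x + N₀)) ^ m) = 0 := by
      rw [map_sum]
      have hterm : ∀ x : ZMod p, algebraMap (ZMod p) (GaloisField p 2) ((x * (x * x + T₀ * x + N₀)) ^ m)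
          = ((algebraMap (ZMod p) (GaloisField p 2)) x * ((algebraMap (ZMod p) (GaloisField p 2)) x + μ)
              * ((algebraMap (ZMod p) (GaloisField p 2)) x + ν)) ^ m := by
        intro x
        rw [map_pow]
        congr 1
        simp only [map_mul, map_add]
        rw [hT, hN]
        ring
      rw [Finset.sum_congr rfl (fun x _ => hterm x), hkey2, hc, neg_zero]
    exact hinj (hmap.trans (map_zero _).symm)
  have hgne : ∀ x : ZMod p, x * x + T₀ * x + N₀ ≠ 0 := by
    intro x hx
    have h1 : (algebraMap (ZMod p) (GaloisField p 2) x + μ) * (algebraMap (ZMod p) (GaloisField p 2) x + ν) = 0 := by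
      have h0 := congrArg (algebraMap (ZMod p) (GaloisField p 2)) hx
      simp only [map_add, map_mul, map_zero] at h0
      rw [hT, hN] at h0
      linear_combination h0
    rcases mul_eq_zero.mp h1 with h | h
    · exact hμ ⟨-x, by rw [map_neg]; linear_combination -h⟩
    · have h2 : algebraMap (ZMod p) (GaloisField p 2) (-x) = ν := by rw [map_neg]; linear_combination -h
      exact hμ ⟨-x, by rw [← hνp, ← h2, ← map_pow, ZMod.pow_card]⟩
  have hNsq : ¬ IsSquare N₀ := by
    apply no_square_aux hp5 hp T₀ N₀ hgne hdisc_nsq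
    rw [← hm]
    exact hW
  -- final construction
  have heuler2 : ∀ z : ZMod p, z ≠ 0 → ¬ IsSquare z → z ^ m = -1 := by
    intro z hz hnsq
    have hsq : z ^ m * z ^ m = 1 := by
      rw [← pow_add]
      have h2 : m + m = p - 1 := by omega
      rw [h2]
      exact ZMod.pow_card_sub_one_eq_one hz
    rcases mul_self_eq_one_iff.mp hsq with h | h
    · exact absurd ((ZMod.euler_criterion p hz).mpr (by rw [← hm]; exact h)) hnsq
    · exact h
  have hd0 : T₀ ^ 2 - 4 * N₀ ≠ 0 := fun h => hdisc_nsq (h ▸ ⟨0, by ring⟩)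
  have hdm := heuler2 _ hd0 hdisc_nsq
  have hNm := heuler2 _ hN0 hNsq
  have ht0ne : -(T₀ ^ 2 - 4 * N₀) / N₀ ≠ 0 := div_ne_zero (neg_ne_zero.mpr hd0) hN0
  have hpow1 : (-(T₀ ^ 2 - 4 * N₀) / N₀) ^ m = 1 := by
    rw [div_pow, neg_pow, hdm, hNm]
    have hm1 : (-1 : ZMod p) ^ m = 1 := Even.neg_one_pow (Nat.even_iff.mpr hmeven)
    rw [hm1]
    norm_num
  obtain ⟨b, hb⟩ := (ZMod.euler_criterion p ht0ne).mpr (by rw [hm] at hpow1; exact hpow1)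
  refine ⟨b, ?_⟩
  calc algebraMap (ZMod p) (GaloisField p 2) (b * b)
      = algebraMap (ZMod p) (GaloisField p 2) (-(T₀ ^ 2 - 4 * N₀) / N₀) := by rw [← hb]
    _ = -(μ - ν) ^ 2 / (μ * ν) := by rw [map_div₀, map_neg, hdiscF, hN]
end
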